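/- The improper integral ∫_0^∞ ( ψ(t+1) - 1/(2(t+1)) - log t ) dt converges and equals (1/2) log(2π). -/

import Mathlib

open Real MeasureTheory Filter

open Set Topology

/-- The digamma function `ψ = Γ'/Γ`. -/
noncomputable def digamma (x : ℝ) : ℝ := deriv Real.Gamma x / Real.Gamma x

lemma diffGamma {x : ℝ} (hx : 0 < x) : DifferentiableAt ℝ Real.Gamma x :=
  Real.differentiableAt_Gamma fun m => by
    have : (0:ℝ) ≤ m := m.cast_nonneg
    intro h; rw [h] at hx; linarith

lemma hasDerivAt_logGamma {x : ℝ} (hx : 0 < x) :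
    HasDerivAt (fun y => Real.log (Real.Gamma y)) (digamma x) x :=
  (diffGamma hx).hasDerivAt.log (Real.Gamma_pos_of_pos hx).ne'

lemma deriv_logGamma {x : ℝ} (hx : 0 < x) :
    deriv (fun y => Real.log (Real.Gamma y)) x = digamma x :=
  (hasDerivAt_logGamma hx).deriv

-- recurrence
lemma digamma_add_one {x : ℝ} (hx : 0 < x) : digamma (x + 1) = digamma x + 1 / x := by
  have key : HasDerivAt (fun y => Real.log (Real.Gamma y)) (digamma x + 1 / x) (x + 1) := by
    have h1 : HasDerivAt (fun y : ℝ => Real.log (Real.Gamma (y)) + Real.log y) (digamma x + 1/x)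
        x := (hasDerivAt_logGamma hx).add ((Real.hasDerivAt_log hx.ne').congr_deriv (one_div x).symm)
    have h2 : HasDerivAt (fun y : ℝ => Real.log (Real.Gamma (y + 1))) (digamma x + 1/x) x := by
      apply h1.congr_of_eventuallyEq
      filter_upwards [eventually_gt_nhds hx] with y hy
      rw [Real.Gamma_add_one hy.ne', Real.log_mul hy.ne' (Real.Gamma_pos_of_pos hy).ne', add_comm]
    have h3 := HasDerivAt.comp_sub_const (f := fun y : ℝ => Real.log (Real.Gamma (y + 1)))
      (x+1) 1 (by simp only [add_sub_cancel_right]; exact h2)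
    exact h3.congr_of_eventuallyEq (by filter_upwards with y; rw [sub_add_cancel])
  exact ((hasDerivAt_logGamma (by linarith)).unique key)

-- convexity lower bound: log s ≤ digamma (s+1)
lemma log_le_digamma_succ {s : ℝ} (hs : 0 < s) : Real.log s ≤ digamma (s + 1) := by
  have hc := Real.convexOn_log_Gamma
  have h := hc.slope_le_deriv (mem_Ioi.mpr hs) (mem_Ioi.mpr (by linarith : (0:ℝ) < s + 1))
    (by linarith) ((diffGamma (by linarith)).log (Real.Gamma_pos_of_pos (by linarith)).ne')
  rw [slope_def_field] at h
  have hΓ : (Real.log ∘ Real.Gamma) (s+1) - (Real.log ∘ Real.Gamma) s = Real.log s := by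
    simp only [Function.comp_apply, Real.Gamma_add_one hs.ne',
      Real.log_mul hs.ne' (Real.Gamma_pos_of_pos hs).ne']
    ring
  rw [hΓ] at h
  simpa only [add_sub_cancel_left, div_one, Function.comp_def,
    deriv_logGamma (by linarith : (0:ℝ) < s + 1)] using h

-- 1/a ≤ log (a+1/2) - log (a-1/2) for a > 1/2
lemma one_div_le_log_sub {a : ℝ} (ha : 1/2 < a) :
    1 / a ≤ Real.log (a + 1/2) - Real.log (a - 1/2) := by
  have h0 : 0 < a - 1/2 := by linarith
  have ha0 : 0 < a := by linarith
  have hle : a - 1/2 ≤ a + 1/2 := by linarith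
  have hint : (∫ s in (a - 1/2)..(a + 1/2), (2/a - s/a^2)) = 1/a := by
    rw [intervalIntegral.integral_sub (intervalIntegrable_const)
      ((continuous_id'.div_const _).intervalIntegrable _ _)]
    simp only [intervalIntegral.integral_div, integral_id,
      intervalIntegral.integral_const, smul_eq_mul]
    field_simp
    ring
  have hlog : (∫ s in (a - 1/2)..(a + 1/2), 1/s) = Real.log (a + 1/2) - Real.log (a - 1/2) := by
    rw [integral_one_div, Real.log_div (by linarith) h0.ne']
    intro h
    rcases (Set.mem_uIcc.mp h) with ⟨h1, _⟩ | ⟨_, h2⟩ <;> linarith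
  rw [← hint, ← hlog]
  apply intervalIntegral.integral_mono_on hle
  · exact (intervalIntegrable_const).sub ((continuous_id'.div_const _).intervalIntegrable _ _)
  · apply intervalIntegral.intervalIntegrable_one_div (fun s hs => ?_) (by fun_prop)
    rcases Set.mem_uIcc.mp hs with ⟨h1, _⟩ | ⟨_, h2⟩ <;> nlinarith
  · intro s hs
    have hs0 : 0 < s := lt_of_lt_of_le h0 hs.1
    have key : 1/s - (2/a - s/a^2) = (a - s)^2 / (s * a^2) := by field_simp; ring
    have h2 : 0 ≤ 1/s - (2/a - s/a^2) := key ▸ (by positivity)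
    linarith

lemma digamma_add_nat {t : ℝ} (ht : 0 < t) (n : ℕ) :
    digamma (t + 1 + n) = digamma (t + 1) + ∑ k ∈ Finset.range n, 1 / (t + 1 + k) := by
  induction n with
  | zero => simp
  | succ n ih =>
    have h : t + 1 + (n + 1 : ℕ) = (t + 1 + n) + 1 := by push_cast; ring
    rw [h, digamma_add_one (by positivity), ih, Finset.sum_range_succ]
    ring

lemma log_add_half_le_digamma {t : ℝ} (ht : 0 < t) :
    Real.log (t + 1/2) ≤ digamma (t + 1) := by
  have htend : Tendsto (fun n : ℕ => Real.log (t + n) - Real.log (t + n + 1/2) + Real.log (t + 1/2))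
      atTop (𝓝 (Real.log (t + 1/2))) := by
    have h0 : Tendsto (fun n : ℕ => Real.log (t + n) - Real.log (t + n + 1/2)) atTop (𝓝 0) := by
      have hb : Tendsto (fun n : ℕ => (1:ℝ)/2 / (t + n)) atTop (𝓝 0) := by
        apply Tendsto.div_atTop tendsto_const_nhds
        exact tendsto_atTop_add_const_left _ t tendsto_natCast_atTop_atTop
      have hb' : Tendsto (fun n : ℕ => -((1:ℝ)/2 / (t + n))) atTop (𝓝 0) := by
        simpa using hb.neg
      apply tendsto_of_tendsto_of_tendsto_of_le_of_le hb' tendsto_const_nhds (fun n => ?_)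
        (fun n => ?_)
      · have hp : (0:ℝ) < t + n := by positivity
        have hp2 : (0:ℝ) < t + n + 1/2 := by linarith
        have := Real.log_le_sub_one_of_pos (x := (t + n + 1/2)/(t + n)) (by positivity)
        rw [Real.log_div hp2.ne' hp.ne'] at this
        have heq : (t + n + 1/2)/(t + n) - 1 = 1/2 / (t + n) := by field_simp; ring
        rw [heq] at this
        linarith
      · have hp : (0:ℝ) < t + n := by positivity
        have := Real.log_le_log hp (by linarith : t + n ≤ t + n + 1/2)
        linarith
    simpa using h0.add_const (Real.log (t + 1/2))
  apply le_of_tendsto htend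
  filter_upwards [eventually_ge_atTop 1] with n hn
  have hrec := digamma_add_nat ht n
  have h2 : Real.log (t + n) ≤ digamma (t + 1 + n) := by
    have hpos : (0:ℝ) < t + n := by positivity
    have := log_le_digamma_succ hpos
    have heq : t + n + 1 = t + 1 + n := by ring
    rwa [heq] at this
  have h3 : ∑ k ∈ Finset.range n, 1 / (t + 1 + k) ≤
      Real.log (t + n + 1/2) - Real.log (t + 1/2) := by
    have htel : ∑ k ∈ Finset.range n, (Real.log (t + (k+1:ℕ) + 1/2) - Real.log (t + k + 1/2))
        = Real.log (t + n + 1/2) - Real.log (t + 1/2) := by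
      rw [Finset.sum_range_sub (f := fun k : ℕ => Real.log (t + k + 1/2))]
      norm_num
    rw [← htel]
    apply Finset.sum_le_sum
    intro k _
    have ha : 1/2 < t + 1 + (k:ℝ) := by
      have : (0:ℝ) ≤ (k:ℝ) := k.cast_nonneg
      linarith
    have := one_div_le_log_sub ha
    have e1 : t + 1 + (k:ℝ) + 1/2 = t + (k+1:ℕ) + 1/2 := by push_cast; ring
    have e2 : t + 1 + (k:ℝ) - 1/2 = t + k + 1/2 := by ring
    rwa [e1, e2] at this
  linarith

lemma integrand_nonneg {t : ℝ} (ht : 0 < t) :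
    0 ≤ digamma (t + 1) - 1 / (2 * (t + 1)) - Real.log t := by
  have h1 := log_add_half_le_digamma ht
  have h2 : Real.log t + 1 / (2 * (t + 1)) ≤ Real.log (t + 1/2) := by
    have hx : (0:ℝ) < t / (t + 1/2) := by positivity
    have := Real.log_le_sub_one_of_pos hx
    rw [Real.log_div ht.ne' (by linarith : t + 1/2 ≠ 0)] at this
    have heq : t / (t + 1/2) - 1 = -(1/2 / (t + 1/2)) := by field_simp; ring
    rw [heq] at this
    have h3 : (1:ℝ) / (2 * (t + 1)) ≤ 1/2 / (t + 1/2) := by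
      rw [div_le_div_iff₀ (by positivity) (by positivity)]
      nlinarith
    linarith
  linarith

noncomputable def Gfn (t : ℝ) : ℝ :=
  Real.log (Real.Gamma (t + 1)) - t * Real.log t + t - 1/2 * Real.log (2 * (t + 1))

lemma hasDerivAt_Gfn {t : ℝ} (ht : 0 < t) :
    HasDerivAt Gfn (digamma (t + 1) - 1 / (2 * (t + 1)) - Real.log t) t := by
  have h1 : HasDerivAt (fun y : ℝ => Real.log (Real.Gamma (y + 1))) (digamma (t + 1)) t := by
    have := HasDerivAt.comp_add_const (f := fun y : ℝ => Real.log (Real.Gamma y)) t 1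
      (hasDerivAt_logGamma (by linarith))
    exact this
  have h2 : HasDerivAt (fun y : ℝ => y * Real.log y) (Real.log t + 1) t :=
    Real.hasDerivAt_mul_log ht.ne'
  have h4 : HasDerivAt (fun y : ℝ => 1/2 * Real.log (2 * (y + 1))) (1 / (2 * (t + 1))) t := by
    have hin : HasDerivAt (fun y : ℝ => 2 * (y + 1)) 2 t := by
      simpa using (((hasDerivAt_id t).add_const 1).const_mul 2)
    have hlog := hin.log (by positivity : (2:ℝ) * (t+1) ≠ 0)
    have := hlog.const_mul (1/2 : ℝ)
    refine this.congr_deriv ?_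
    field_simp
  have := ((h1.sub h2).add (hasDerivAt_id t)).sub h4
  refine this.congr_deriv ?_
  ring

lemma Gfn_zero : Gfn 0 = -(1/2 * Real.log 2) := by
  simp [Gfn, Real.Gamma_one, Real.log_zero]

lemma continuousWithinAt_Gfn : ContinuousWithinAt Gfn (Ici 0) 0 := by
  have h3 : ContinuousAt (fun t : ℝ => Real.Gamma (t + 1)) 0 := by
    have h2 : ContinuousAt Real.Gamma ((fun t : ℝ => t + 1) 0) := by
      simp only [zero_add]
      exact (diffGamma one_pos).continuousAt
    exact ContinuousAt.comp (f := fun t : ℝ => t + 1) h2 (by fun_prop)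
  have h4 : ContinuousAt (fun t : ℝ => Real.log (Real.Gamma (t + 1))) 0 := by
    apply ContinuousAt.comp (Real.continuousAt_log ?_) h3
    simp [Real.Gamma_one]
  have h6 : ContinuousAt (fun t : ℝ => Real.log (2 * (t + 1))) 0 := by
    apply ContinuousAt.comp (Real.continuousAt_log ?_) (by fun_prop : ContinuousAt (fun t : ℝ => 2 * (t + 1)) 0)
    norm_num
  exact (((h4.continuousWithinAt.sub
    (Real.continuous_mul_log.continuousAt.continuousWithinAt)).add
    continuousWithinAt_id).sub
    ((continuousAt_const.mul h6).continuousWithinAt))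

lemma tendsto_Gfn_nat : Tendsto (fun n : ℕ => Gfn n) atTop (𝓝 (1/2 * Real.log π)) := by
  have hA : Tendsto (fun n : ℕ => Real.log (Stirling.stirlingSeq n)) atTop
      (𝓝 (1/2 * Real.log π)) := by
    have h := (Real.continuousAt_log (Real.sqrt_pos.mpr Real.pi_pos).ne').tendsto.comp
      Stirling.tendsto_stirlingSeq_sqrt_pi
    rw [show (1:ℝ)/2 * Real.log π = Real.log (Real.sqrt π) from by
      rw [Real.log_sqrt Real.pi_pos.le]; ring]
    exact h
  have hB : Tendsto (fun n : ℕ => 1/2 * (Real.log (2 * ((n:ℝ)+1)) - Real.log (2 * n))) atTop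
      (𝓝 0) := by
    have h0 : Tendsto (fun n : ℕ => Real.log (2 * ((n:ℝ)+1)) - Real.log (2 * n)) atTop (𝓝 0) := by
      apply tendsto_of_tendsto_of_tendsto_of_le_of_le' tendsto_const_nhds
        (tendsto_one_div_atTop_nhds_zero_nat)
      · filter_upwards [eventually_ge_atTop 1] with n hn
        have hn' : (1:ℝ) ≤ n := by exact_mod_cast hn
        have : (0:ℝ) < 2 * n := by linarith
        have := Real.log_le_log this (by linarith : 2 * (n:ℝ) ≤ 2 * ((n:ℝ)+1))
        linarith
      · filter_upwards [eventually_ge_atTop 1] with n hn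
        have hn' : (1:ℝ) ≤ n := by exact_mod_cast hn
        have hp : (0:ℝ) < 2 * n := by linarith
        have hp2 : (0:ℝ) < 2 * ((n:ℝ)+1) := by linarith
        have hle := Real.log_le_sub_one_of_pos (x := (2 * ((n:ℝ)+1))/(2 * n)) (by positivity)
        rw [Real.log_div hp2.ne' hp.ne'] at hle
        have heq : (2 * ((n:ℝ)+1))/(2 * n) - 1 = 1 / n := by field_simp; ring
        rw [heq] at hle
        linarith
    simpa using h0.const_mul (1/2 : ℝ)
  have key : ∀ᶠ n : ℕ in atTop, Real.log (Stirling.stirlingSeq n)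
      - 1/2 * (Real.log (2 * ((n:ℝ)+1)) - Real.log (2 * n)) = Gfn n := by
    filter_upwards [eventually_ge_atTop 1] with n hn
    have hn0 : (0:ℝ) < n := by exact_mod_cast hn
    rw [Stirling.log_stirlingSeq_formula, Gfn]
    have hΓ : Real.Gamma ((n:ℝ) + 1) = (Nat.factorial n : ℝ) := by
      exact_mod_cast Real.Gamma_nat_eq_factorial n
    rw [hΓ, Real.log_div hn0.ne' (Real.exp_ne_zero 1), Real.log_exp]
    ring
  exact Tendsto.congr' key (by simpa using hA.sub hB)

lemma continuousOn_Gfn : ContinuousOn Gfn (Ici 0) := by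
  intro x hx
  rcases eq_or_lt_of_le (mem_Ici.mp hx) with h | h
  · rw [← h]; exact continuousWithinAt_Gfn
  · exact (hasDerivAt_Gfn h).continuousAt.continuousWithinAt

lemma monotoneOn_Gfn : MonotoneOn Gfn (Ici 0) := by
  apply monotoneOn_of_deriv_nonneg (convex_Ici 0) continuousOn_Gfn
  · intro x hx
    rw [interior_Ici] at hx
    exact (hasDerivAt_Gfn hx).differentiableAt.differentiableWithinAt
  · intro x hx
    rw [interior_Ici] at hx
    rw [(hasDerivAt_Gfn hx).deriv]
    exact integrand_nonneg hx

lemma tendsto_Gfn : Tendsto Gfn atTop (𝓝 (1/2 * Real.log π)) := by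
  have hfloor : Tendsto (fun t : ℝ => Gfn (⌊t⌋₊ : ℕ)) atTop (𝓝 (1/2 * Real.log π)) :=
    tendsto_Gfn_nat.comp tendsto_nat_floor_atTop
  have hceil : Tendsto (fun t : ℝ => Gfn ((⌊t⌋₊ + 1 : ℕ))) atTop (𝓝 (1/2 * Real.log π)) :=
    (tendsto_Gfn_nat.comp (tendsto_add_atTop_nat 1)).comp tendsto_nat_floor_atTop
  apply tendsto_of_tendsto_of_tendsto_of_le_of_le' hfloor hceil
  · filter_upwards [eventually_ge_atTop (0:ℝ)] with t ht
    exact monotoneOn_Gfn (mem_Ici.mpr (Nat.cast_nonneg _)) (mem_Ici.mpr ht) (Nat.floor_le ht)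
  · filter_upwards [eventually_ge_atTop (0:ℝ)] with t ht
    have h1 : t ≤ ((⌊t⌋₊ + 1 : ℕ) : ℝ) := by
      push_cast
      exact (Nat.lt_floor_add_one t).le
    exact monotoneOn_Gfn (mem_Ici.mpr ht) (mem_Ici.mpr (by positivity)) h1

theorem integral_digamma_sub_log :
    IntegrableOn (fun t : ℝ => digamma (t + 1) - 1 / (2 * (t + 1)) - Real.log t)
      (Set.Ioi (0 : ℝ)) ∧
    ∫ t in Set.Ioi (0 : ℝ), (digamma (t + 1) - 1 / (2 * (t + 1)) - Real.log t)
      = (1 / 2) * Real.log (2 * π) := by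
  have hderiv : ∀ x ∈ Ioi (0:ℝ),
      HasDerivAt Gfn (digamma (x + 1) - 1 / (2 * (x + 1)) - Real.log x) x :=
    fun x hx => hasDerivAt_Gfn hx
  have hpos : ∀ x ∈ Ioi (0:ℝ), 0 ≤ digamma (x + 1) - 1 / (2 * (x + 1)) - Real.log x :=
    fun x hx => integrand_nonneg hx
  refine ⟨integrableOn_Ioi_deriv_of_nonneg continuousWithinAt_Gfn hderiv hpos tendsto_Gfn, ?_⟩
  rw [integral_Ioi_of_hasDerivAt_of_nonneg continuousWithinAt_Gfn hderiv hpos tendsto_Gfn,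
    Gfn_zero, Real.log_mul two_ne_zero Real.pi_ne_zero]
  ring
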